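/- Let G be a simple graph, c a 2-coloring of its edges, and φ an automorphism of G. For every monochromatic component a of (G,c), the set S(a) of monochromatic components induces a connected subgraph of the component graph Comp(G,c). -/

import Mathlib

open SimpleGraph

variable {V : Type*}

/-- The spanning subgraph of `G` consisting of the edges of color `t`. -/
def monoSubgraph (G : SimpleGraph V) (c : Sym2 V → Bool) (t : Bool) : SimpleGraph V where
  Adj u v := G.Adj u v ∧ c s(u, v) = t
  symm := ⟨fun u v h => ⟨h.1.symm, by rw [Sym2.eq_swap]; exact h.2⟩⟩
  loopless := ⟨fun u h => G.irrefl h.1⟩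

/-- A monochromatic component of `(G, c)`: a color together with a connected component
of the spanning subgraph of edges of that color. -/
abbrev MonoComp (G : SimpleGraph V) (c : Sym2 V → Bool) :=
  Σ t : Bool, (monoSubgraph G c t).ConnectedComponent

/-- The vertex `x` belongs to the monochromatic component `a`. -/
def MonoComp.Mem {G : SimpleGraph V} {c : Sym2 V → Bool} (a : MonoComp G c) (x : V) : Prop :=
  (monoSubgraph G c a.1).connectedComponentMk x = a.2

/-- The component graph `Comp(G, c)`: vertices are the monochromatic components,
two of them adjacent iff they are distinct and share a vertex of `G`. -/
def compGraph (G : SimpleGraph V) (c : Sym2 V → Bool) : SimpleGraph (MonoComp G c) where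
  Adj a b := a ≠ b ∧ ∃ x : V, a.Mem x ∧ b.Mem x
  symm := ⟨fun a b h => ⟨h.1.symm, h.2.imp fun x hx => ⟨hx.2, hx.1⟩⟩⟩
  loopless := ⟨fun a h => h.1 rfl⟩

/-- The number of color changes along a list of edges: the number of consecutive
pairs receiving different colors. -/
def colorChanges (c : Sym2 V → Bool) : List (Sym2 V) → ℕ
  | e₁ :: e₂ :: rest => (if c e₁ = c e₂ then 0 else 1) + colorChanges c (e₂ :: rest)
  | _ => 0

/-- The set `S(a)` of monochromatic components containing an image under `φ` of a
vertex of the monochromatic component `a`. -/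
def Sset {G : SimpleGraph V} (φ : G ≃g G) (c : Sym2 V → Bool) (a : MonoComp G c) :
    Set (MonoComp G c) :=
  {b | ∃ x : V, a.Mem x ∧ b.Mem (φ x)}


lemma share_reachable {G : SimpleGraph V} {c : Sym2 V → Bool} {φ : G ≃g G}
    {a : MonoComp G c} {b₁ b₂ : MonoComp G c} (h₁ : b₁ ∈ Sset φ c a)
    (h₂ : b₂ ∈ Sset φ c a) {v : V} (m₁ : b₁.Mem v) (m₂ : b₂.Mem v) :
    ((compGraph G c).induce (Sset φ c a)).Reachable ⟨b₁, h₁⟩ ⟨b₂, h₂⟩ := by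
  by_cases h : b₁ = b₂
  · subst h
    exact Reachable.refl _
  · exact SimpleGraph.Adj.reachable (show (compGraph G c).Adj b₁ b₂ from ⟨h, v, m₁, m₂⟩)

lemma walk_reach {G : SimpleGraph V} {c : Sym2 V → Bool} (φ : G ≃g G)
    (a : MonoComp G c) {x₀ : V}
    {x : V} (w : (monoSubgraph G c a.1).Walk x x₀) :
    ∀ (hx₀ : a.Mem x₀) (_hx : a.Mem x) (b : MonoComp G c) (hbx : b.Mem (φ x)) (hb : b ∈ Sset φ c a),
    ((compGraph G c).induce (Sset φ c a)).Reachable ⟨b, hb⟩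
      ⟨⟨a.1, (monoSubgraph G c a.1).connectedComponentMk (φ x₀)⟩, ⟨x₀, hx₀, rfl⟩⟩ := by
  induction w with
  | nil =>
    intro hx₀ hx b hbx hb
    exact share_reachable hb _ hbx rfl
  | @cons u v z h w ih =>
    intro hx₀ hx b hbx hb
    have hy : a.Mem v := by
      unfold MonoComp.Mem at hx ⊢
      rw [← hx]
      exact (SimpleGraph.ConnectedComponent.sound h.reachable).symm
    have hGadj : G.Adj (φ u) (φ v) := φ.map_adj_iff.mpr h.1
    set t' : Bool := c s(φ u, φ v) with ht'
    have hadj : (monoSubgraph G c t').Adj (φ u) (φ v) := ⟨hGadj, rfl⟩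
    set b' : MonoComp G c := ⟨t', (monoSubgraph G c t').connectedComponentMk (φ v)⟩ with hb'def
    have hb'v : b'.Mem (φ v) := rfl
    have hb'u : b'.Mem (φ u) := SimpleGraph.ConnectedComponent.sound hadj.reachable
    have hb' : b' ∈ Sset φ c a := ⟨v, hy, hb'v⟩
    exact (share_reachable hb hb' hbx hb'u).trans (ih hx₀ hy b' hb'v hb')

/-- For every monochromatic component `a`, the set `S(a)` induces a
connected subgraph of the component graph. -/
theorem Sset_induce_connected
    {V : Type*} (G : SimpleGraph V) (c : Sym2 V → Bool) (φ : G ≃g G)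
    (a : MonoComp G c) :
    ((compGraph G c).induce (Sset φ c a)).Connected := by
  obtain ⟨x₀, hx₀⟩ := a.2.exists_rep
  have hx₀' : a.Mem x₀ := hx₀
  haveI : Nonempty ↑(Sset φ c a) :=
    ⟨⟨⟨a.1, (monoSubgraph G c a.1).connectedComponentMk (φ x₀)⟩, ⟨x₀, hx₀', rfl⟩⟩⟩
  refine ⟨fun p q => ?_⟩
  obtain ⟨b, hb⟩ := p
  obtain ⟨b', hb'⟩ := q
  obtain ⟨x, hax, hbx⟩ := hb
  obtain ⟨y, hay, hby⟩ := hb'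
  obtain ⟨w⟩ := SimpleGraph.ConnectedComponent.exact (hax.trans hx₀'.symm)
  obtain ⟨w'⟩ := SimpleGraph.ConnectedComponent.exact (hay.trans hx₀'.symm)
  exact (walk_reach φ a w hx₀' hax b hbx ⟨x, hax, hbx⟩).trans
    (walk_reach φ a w' hx₀' hay b' hby ⟨y, hay, hby⟩).symm
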